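/- arXiv:1901.04337 — 3 statements merged into one kernel-verified Lean document; each statement's English description precedes it below -/
import Mathlib

section
/- If u(x,t) = -cC₀/(ab - e^{-cC₀((x-t)+C₁)}) and v(x,t) = cC₀/(a(ab·e^{cC₀((x-t)+C₁)} - 1)), where a, b, C₀, C₁ are real constants with a ≠ 0, c = 1, and the denominators are nonzero, then u and v satisfy the Cheng system u_x = -a·u·v and v_t = b·u_x. -/
/-- Explicit traveling-wave (c = 1) solution of the Cheng system
`u_x = -a u v`, `v_t = b u_x`. -/
theorem cheng_explicit_solution (a b c C₀ C₁ : ℝ) (ha : a ≠ 0) (hc : c = 1)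
    (u v : ℝ → ℝ → ℝ)
    (hu : ∀ x t, u x t = -(c * C₀) / (a * b - Real.exp (-(c * C₀) * ((x - t) + C₁))))
    (hv : ∀ x t, v x t = (c * C₀) / (a * (a * b * Real.exp ((c * C₀) * ((x - t) + C₁)) - 1)))
    (hden1 : ∀ x t, a * b - Real.exp (-(c * C₀) * ((x - t) + C₁)) ≠ 0)
    (hden2 : ∀ x t, a * (a * b * Real.exp ((c * C₀) * ((x - t) + C₁)) - 1) ≠ 0) :
    ∀ x t, deriv (fun x' => u x' t) x = -a * u x t * v x t ∧
      deriv (fun t' => v x t') t = b * deriv (fun x' => u x' t) x := by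
  intro x t
  set k := c * C₀ with hk
  -- derivative in x of u
  have hx1 : HasDerivAt (fun x' : ℝ => -k * ((x' - t) + C₁)) (-k) x := by
    have := (((hasDerivAt_id x).sub_const t).add_const C₁).const_mul (-k)
    simpa using this
  have hx2 := hx1.exp
  have hx3 : HasDerivAt (fun x' : ℝ => a * b - Real.exp (-k * ((x' - t) + C₁)))
      (-(Real.exp (-k * ((x - t) + C₁)) * -k)) x := hx2.const_sub (a * b)
  have hU : HasDerivAt (fun x' : ℝ => u x' t)
      ((0 * (a * b - Real.exp (-k * ((x - t) + C₁))) -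
        (-k) * -(Real.exp (-k * ((x - t) + C₁)) * -k)) /
        (a * b - Real.exp (-k * ((x - t) + C₁)))^2) x := by
    have := (hasDerivAt_const x (-k)).div hx3 (hden1 x t)
    refine HasDerivAt.congr_of_eventuallyEq this ?_
    filter_upwards with x' using (hu x' t).symm ▸ rfl
  have hUd : deriv (fun x' => u x' t) x =
      (0 * (a * b - Real.exp (-k * ((x - t) + C₁))) -
        (-k) * -(Real.exp (-k * ((x - t) + C₁)) * -k)) /
        (a * b - Real.exp (-k * ((x - t) + C₁)))^2 := hU.deriv
  -- derivative in t of v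
  have ht1 : HasDerivAt (fun t' : ℝ => k * ((x - t') + C₁)) (-k) t := by
    have := (((hasDerivAt_id t).const_sub x).add_const C₁).const_mul k
    simpa using this
  have ht2 := ht1.exp
  have ht3 : HasDerivAt (fun t' : ℝ => a * (a * b * Real.exp (k * ((x - t') + C₁)) - 1))
      (a * (a * b * (Real.exp (k * ((x - t) + C₁)) * -k))) t := by
    have := (((ht2.const_mul (a * b)).sub_const 1).const_mul a)
    simpa [mul_assoc] using this
  have hV : HasDerivAt (fun t' : ℝ => v x t')
      ((0 * (a * (a * b * Real.exp (k * ((x - t) + C₁)) - 1)) -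
        k * (a * (a * b * (Real.exp (k * ((x - t) + C₁)) * -k)))) /
        (a * (a * b * Real.exp (k * ((x - t) + C₁)) - 1))^2) t := by
    have := (hasDerivAt_const t k).div ht3 (hden2 x t)
    refine HasDerivAt.congr_of_eventuallyEq this ?_
    filter_upwards with t' using (hv x t').symm ▸ rfl
  have hVd := hV.deriv
  have hexp : Real.exp (k * ((x - t) + C₁)) = (Real.exp (-k * ((x - t) + C₁)))⁻¹ := by
    rw [← Real.exp_neg]; ring_nf
  have hE : Real.exp (-k * ((x - t) + C₁)) ≠ 0 := Real.exp_ne_zero _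
  have hd1 := hden1 x t
  have hd2 := hden2 x t
  rw [hexp] at hd2
  have key : a * (a * b * (Real.exp (-k * ((x - t) + C₁)))⁻¹ - 1) =
      a * (Real.exp (-k * ((x - t) + C₁)))⁻¹ * (a * b - Real.exp (-k * ((x - t) + C₁))) := by
    field_simp [hd1, hE, ha]
  constructor
  · rw [hUd, hu x t, hv x t, hexp, key]
    set E := Real.exp (-k * ((x - t) + C₁)) with hEdef
    set D := a * b - E with hDdef
    clear_value E
    clear hEdef hDdef hexp hu hv hU hUd hV hVd hx1 hx2 hx3 ht1 ht2 ht3 hd2 key hden1 hden2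
    clear_value D
    field_simp
    ring
  · rw [hVd, hUd, hexp, key]
    set E := Real.exp (-k * ((x - t) + C₁)) with hEdef
    set D := a * b - E with hDdef
    clear_value E
    clear hEdef hDdef hexp hu hv hU hUd hV hVd hx1 hx2 hx3 ht1 ht2 ht3 hd2 key hden1 hden2
    clear_value D
    field_simp
    ring
end

section
/- Let w, k : ℝ → ℝ be differentiable satisfying f·w'(f) + w(f) = a·k(f)·w(f) and k'(f) = -b·(f·w'(f) + w(f)). If w is twice differentiable, then w satisfies f·w·w'' + a·b·w³ + w·w' + a·b·f·w²·w' - f·(w')² = 0. -/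
/-- Eliminating `k` from `f w' + w = a k w`, `k' = -b (f w' + w)` yields
`f w w'' + a b w³ + w w' + a b f w² w' - f (w')² = 0`. -/
theorem cheng_scaling_secondOrder (a b : ℝ)
    (w k : ℝ → ℝ) (hw : Differentiable ℝ w) (hk : Differentiable ℝ k)
    (hw2 : Differentiable ℝ (deriv w))
    (hode1 : ∀ f, f * deriv w f + w f = a * k f * w f)
    (hode2 : ∀ f, deriv k f = -b * (f * deriv w f + w f)) :
    ∀ f, f * w f * deriv (deriv w) f + a * b * (w f) ^ 3 + w f * deriv w f
      + a * b * f * (w f) ^ 2 * deriv w f - f * (deriv w f) ^ 2 = 0 := by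
  intro f
  have h1 : HasDerivAt (fun x => x * deriv w x + w x)
      (1 * deriv w f + f * deriv (deriv w) f + deriv w f) f :=
    ((hasDerivAt_id f).mul (hw2 f).hasDerivAt).add (hw f).hasDerivAt
  have heq : (fun x => x * deriv w x + w x) = fun x => a * k x * w x := funext hode1
  rw [heq] at h1
  have h2 : HasDerivAt (fun x => a * k x * w x)
      (a * deriv k f * w f + a * k f * deriv w f) f :=
    ((hk f).hasDerivAt.const_mul a).mul (hw f).hasDerivAt
  have key := h1.unique h2
  have hk1 := hode1 f
  have hk2 := hode2 f
  rw [hk2] at key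
  linear_combination (w f) * key - (deriv w f) * hk1
end

section
/- Let w : (0,∞) → ℝ be twice differentiable, nowhere zero, satisfying f·w·w'' + a·b·w³ + w·w' + a·b·f·w²·w' - f·(w')² = 0. Define r(f) = f·w(f) and v(f) = f²·w'(f). Then wherever r'(f) ≠ 0, the function v viewed as a function of r satisfies dv/dr = -a·b·r + v/r (for r ≠ 0). -/
/-- Reduction of `f w w'' + ab w³ + w w' + ab f w² w' - f (w')² = 0` via the
differential invariants `r = f w`, `v = f² w'` gives `dv/dr = -ab r + v/r`. -/
theorem cheng_scaling_reduction_euler (a b : ℝ)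
    (w : ℝ → ℝ) (hw : Differentiable ℝ w) (hw2 : Differentiable ℝ (deriv w))
    (hwne : ∀ f : ℝ, 0 < f → w f ≠ 0)
    (hode : ∀ f : ℝ, 0 < f →
      f * w f * deriv (deriv w) f + a * b * (w f) ^ 3 + w f * deriv w f
        + a * b * f * (w f) ^ 2 * deriv w f - f * (deriv w f) ^ 2 = 0)
    (r v : ℝ → ℝ) (hr : ∀ f, r f = f * w f) (hv : ∀ f, v f = f ^ 2 * deriv w f) :
    ∀ f : ℝ, 0 < f → deriv r f ≠ 0 → r f ≠ 0 →
      deriv v f / deriv r f = -(a * b) * r f + v f / r f := by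
  have hrdef : r = fun x => x * w x := funext hr
  have hvdef : v = fun x => x ^ 2 * deriv w x := funext hv
  intro f hf hr' hrne
  have hwf := hwne f hf
  have hfne : f ≠ 0 := ne_of_gt hf
  have hdr : deriv r f = w f + f * deriv w f := by
    rw [hrdef]
    have h := ((hasDerivAt_id' (x := f)).mul (hw f).hasDerivAt).deriv
    rw [show (fun x => x * w x) = ((fun x => x) * w) from rfl, h]; ring
  have hdv : deriv v f = 2 * f * deriv w f + f ^ 2 * deriv (deriv w) f := by
    rw [hvdef]
    have h := ((hasDerivAt_pow 2 f).mul (hw2 f).hasDerivAt).deriv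
    rw [show (fun x => x ^ 2 * deriv w x) = ((fun x => x ^ 2) * deriv w) from rfl, h]; push_cast; ring
  have hode' := hode f hf
  rw [hdr, hdv, hr f, hv f]
  rw [hdr] at hr'
  field_simp
  nlinarith [hode', sq_nonneg (w f), mul_self_nonneg f]
end
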